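/- After an incremental edge update on (u,v), every shortest path π from s to b in G' is of exactly one of two types: (i) π is also a shortest path from s to b in G (and uses no new weight of (u,v)); or (ii) π contains the edge (u,v), i.e., π has the form s ⇝ u → v ⇝ b, where the prefix s ⇝ u is a shortest path from s to u in G and the suffix v ⇝ b is a shortest path from v to b in G. -/

import Mathlib

open scoped ENNReal

namespace BC

variable {V : Type*}

/-- `p` is a path from `s` to `t` in the weighted digraph with weight function `w`;
an edge is present iff its weight is not `⊤`. -/
def IsPath (w : V → V → ℝ≥0∞) (s t : V) (p : List V) : Prop :=
  p ≠ [] ∧ p.head? = some s ∧ p.getLast? = some t ∧ p.Chain' (fun a b => w a b ≠ ⊤)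

/-- The weight of a path: the sum of the weights of its consecutive edges. -/
noncomputable def pWeight (w : V → V → ℝ≥0∞) (p : List V) : ℝ≥0∞ :=
  ((p.zip p.tail).map fun e => w e.1 e.2).sum

/-- The shortest-path distance `d(s,t)` (equal to `⊤` if no path exists). -/
noncomputable def dist (w : V → V → ℝ≥0∞) (s t : V) : ℝ≥0∞ :=
  ⨅ p ∈ {p | IsPath w s t p}, pWeight w p

/-- `p` is a shortest path from `s` to `t`. -/
def IsShortest (w : V → V → ℝ≥0∞) (s t : V) (p : List V) : Prop :=
  IsPath w s t p ∧ pWeight w p = dist w s t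

/-- `σ_{st}`: the number of shortest paths from `s` to `t`. -/
noncomputable def nsp (w : V → V → ℝ≥0∞) (s t : V) : ℕ :=
  Set.ncard {p | IsShortest w s t p}

/-- `σ_{st}(x)`: the number of shortest paths from `s` to `t` passing through `x`. -/
noncomputable def nspVia (w : V → V → ℝ≥0∞) (s t x : V) : ℕ :=
  Set.ncard {p | IsShortest w s t p ∧ x ∈ p}

/-- The directed edge `(a,b)` lies on the path `p`. -/
def edgeOn (p : List V) (a b : V) : Prop := (a, b) ∈ p.zip p.tail

/-- The shortest-path DAG rooted at `s`: the edges lying on shortest paths from `s`. -/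
def dagSet (w : V → V → ℝ≥0∞) (s : V) : Set (V × V) :=
  {e | w e.1 e.2 ≠ ⊤ ∧ dist w s e.1 ≠ ⊤ ∧ dist w s e.1 + w e.1 e.2 = dist w s e.2}

private lemma chain'_iff_edges {R : V → V → Prop} : ∀ (p : List V),
    p.Chain' R ↔ ∀ e ∈ p.zip p.tail, R e.1 e.2
  | [] => by simp [List.Chain']
  | [a] => by simp [List.Chain']
  | a :: b :: r => by
    rw [List.Chain', List.isChain_cons_cons]
    simp only [List.tail_cons, List.zip_cons_cons, List.mem_cons]
    constructor
    · rintro ⟨hab, hc⟩ e he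
      rcases he with rfl | he
      · exact hab
      · exact (chain'_iff_edges (b :: r)).mp hc e he
    · intro h
      exact ⟨h _ (Or.inl rfl), (chain'_iff_edges (b :: r)).mpr fun e he => h e (Or.inr he)⟩

private lemma edges_append (u v : V) : ∀ (p₁ p₂ : List V),
    p₁.getLast? = some u → p₂.head? = some v →
    (p₁ ++ p₂).zip (p₁ ++ p₂).tail = p₁.zip p₁.tail ++ (u, v) :: p₂.zip p₂.tail
  | [], _, h1, _ => by simp at h1
  | [x], p₂, h1, h2 => by
    simp only [List.getLast?_singleton, Option.some.injEq] at h1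
    subst h1
    cases p₂ with
    | nil => simp at h2
    | cons y t =>
      simp only [List.head?_cons, Option.some.injEq] at h2
      subst h2
      simp
  | x :: y :: r, p₂, h1, h2 => by
    have ih := edges_append u v (y :: r) p₂ (by simpa using h1) h2
    simp only [List.cons_append, List.tail_cons, List.zip_cons_cons] at ih ⊢
    rw [ih]

private lemma edgeOn_split {u v : V} : ∀ {p : List V}, edgeOn p u v →
    ∃ p₁ p₂, p = p₁ ++ p₂ ∧ p₁.getLast? = some u ∧ p₂.head? = some v
  | [], h => by simp [edgeOn] at h
  | [a], h => by simp [edgeOn] at h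
  | a :: c :: r, h => by
    simp only [edgeOn, List.tail_cons, List.zip_cons_cons, List.mem_cons, Prod.mk.injEq] at h
    rcases h with ⟨rfl, rfl⟩ | h
    · exact ⟨[u], v :: r, rfl, rfl, rfl⟩
    · obtain ⟨q₁, q₂, heq, h1, h2⟩ := edgeOn_split (p := c :: r) h
      refine ⟨a :: q₁, q₂, by rw [List.cons_append, ← heq], ?_, h2⟩
      have hq₁ : q₁ ≠ [] := by rintro rfl; simp at h1
      simp [List.getLast?_cons, h1]

private lemma pWeight_append (w : V → V → ℝ≥0∞) {p₁ p₂ : List V} {u v : V}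
    (h1 : p₁.getLast? = some u) (h2 : p₂.head? = some v) :
    pWeight w (p₁ ++ p₂) = pWeight w p₁ + w u v + pWeight w p₂ := by
  rw [pWeight, edges_append u v p₁ p₂ h1 h2]
  simp [pWeight, add_assoc]

private lemma sum_ne_top {l : List ℝ≥0∞} (h : ∀ x ∈ l, x ≠ ⊤) : l.sum ≠ ⊤ := by
  induction l with
  | nil => simp
  | cons a t ih =>
    simp only [List.sum_cons]
    exact ENNReal.add_ne_top.mpr ⟨h a (by simp), ih fun x hx => h x (by simp [hx])⟩

private lemma pWeight_ne_top {w : V → V → ℝ≥0∞} {p : List V}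
    (h : p.Chain' (fun a b => w a b ≠ ⊤)) : pWeight w p ≠ ⊤ := by
  refine sum_ne_top ?_
  intro x hx
  simp only [List.mem_map] at hx
  obtain ⟨e, he, rfl⟩ := hx
  exact (chain'_iff_edges p).mp h e he

private lemma dist_le_pWeight {w : V → V → ℝ≥0∞} {s t : V} {p : List V}
    (hp : IsPath w s t p) : dist w s t ≤ pWeight w p :=
  iInf₂_le p hp

private lemma exists_path_lt {w : V → V → ℝ≥0∞} {s t : V} {c : ℝ≥0∞}
    (h : dist w s t < c) : ∃ p, IsPath w s t p ∧ pWeight w p < c := by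
  rw [dist] at h
  simp only [iInf_lt_iff, Set.mem_setOf_eq] at h
  obtain ⟨p, hp, hlt⟩ := h
  exact ⟨p, hp, hlt⟩

private lemma head_of_append {p₁ p₂ : List V} (h : p₁ ≠ []) :
    (p₁ ++ p₂).head? = p₁.head? := by
  cases p₁ with
  | nil => simp at h
  | cons a t => simp

private lemma last_of_append {p₁ p₂ : List V} (h : p₂ ≠ []) :
    (p₁ ++ p₂).getLast? = p₂.getLast? := by
  rw [List.getLast?_append]
  cases h' : p₂.getLast? with
  | none => exact absurd (List.getLast?_eq_none_iff.mp h') h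
  | some x => simp

private lemma ne_nil_of_getLast? {p : List V} {u : V} (h : p.getLast? = some u) : p ≠ [] := by
  rintro rfl; simp at h

private lemma ne_nil_of_head? {p : List V} {u : V} (h : p.head? = some u) : p ≠ [] := by
  rintro rfl; simp at h

private lemma pWeight_mono {w w' : V → V → ℝ≥0∞} (hle : ∀ a b, w' a b ≤ w a b) (p : List V) :
    pWeight w' p ≤ pWeight w p :=
  List.sum_le_sum fun e _ => hle e.1 e.2

private lemma dist_mono {w w' : V → V → ℝ≥0∞} (hle : ∀ a b, w' a b ≤ w a b) (s t : V) :
    dist w' s t ≤ dist w s t := by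
  refine le_iInf₂ fun p hp => ?_
  have hp' : IsPath w' s t p :=
    ⟨hp.1, hp.2.1, hp.2.2.1, (chain'_iff_edges p).mpr fun e he htop =>
      (chain'_iff_edges p).mp hp.2.2.2 e he (top_le_iff.mp (htop ▸ hle e.1 e.2))⟩
  exact (dist_le_pWeight hp').trans (pWeight_mono hle p)

private lemma transfer {w w' : V → V → ℝ≥0∞} {u v : V}
    (hle : ∀ a b, w' a b ≤ w a b)
    (hsame : ∀ a b : V, (a, b) ≠ (u, v) → w' a b = w a b)
    {s t : V} {q : List V} (hq : IsShortest w' s t q) (hno : ¬ edgeOn q u v) :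
    IsShortest w s t q := by
  have hedges : ∀ e ∈ q.zip q.tail, w' e.1 e.2 = w e.1 e.2 := by
    intro e he
    refine hsame e.1 e.2 fun hcontra => ?_
    have heq : e = (u, v) := by rw [← hcontra]
    exact hno (show edgeOn q u v by rw [edgeOn, ← heq]; exact he)
  have hweq : pWeight w' q = pWeight w q :=
    congrArg List.sum (List.map_congr_left hedges)
  have hpath : IsPath w s t q :=
    ⟨hq.1.1, hq.1.2.1, hq.1.2.2.1, (chain'_iff_edges q).mpr fun e he =>
      (hedges e he) ▸ (chain'_iff_edges q).mp hq.1.2.2.2 e he⟩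
  refine ⟨hpath, le_antisymm ?_ (dist_le_pWeight hpath)⟩
  rw [← hweq, hq.2]
  exact dist_mono hle s t

/-- after an incremental edge update on `(u,v)`, every shortest path `p`
from `s` to `b` in `G'` is of exactly one of two types:
(i) `p` is a shortest path from `s` to `b` in `G` and does not use the edge `(u,v)`; or
(ii) `p` contains the edge `(u,v)`, i.e. `p = p₁ ++ p₂` with `p₁` a shortest path from
`s` to `u` in `G` and `p₂` a shortest path from `v` to `b` in `G`. -/
theorem shortest_path_two_types [Fintype V] (w w' : V → V → ℝ≥0∞) (u v : V)
    (hpos : ∀ a b, 0 < w a b) (hpos' : ∀ a b, 0 < w' a b)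
    (hdec : w' u v < w u v)
    (hsame : ∀ a b : V, (a, b) ≠ (u, v) → w' a b = w a b)
    (s b : V) (p : List V) (hp : IsShortest w' s b p) :
    Xor'
      (IsShortest w s b p ∧ ¬ edgeOn p u v)
      (edgeOn p u v ∧ ∃ p₁ p₂ : List V, p = p₁ ++ p₂ ∧
        p₁.getLast? = some u ∧ p₂.head? = some v ∧
        IsShortest w s u p₁ ∧ IsShortest w v b p₂) := by
  have hle : ∀ a b, w' a b ≤ w a b := by
    intro a c
    by_cases hab : (a, c) = (u, v)
    · rw [Prod.mk.injEq] at hab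
      obtain ⟨rfl, rfl⟩ := hab
      exact hdec.le
    · exact (hsame a c hab).le
  by_cases h : edgeOn p u v
  · refine Or.inr ⟨⟨h, ?_⟩, fun hA => hA.2 h⟩
    obtain ⟨p₁, p₂, rfl, h1, h2⟩ := edgeOn_split h
    have hne₁ := ne_nil_of_getLast? h1
    have hne₂ := ne_nil_of_head? h2
    obtain ⟨⟨hne, hhead, hlast, hchain⟩, hw⟩ := hp
    rw [List.Chain', List.isChain_append] at hchain
    obtain ⟨hc₁, hc₂, hcmid⟩ := hchain
    have huvne : w' u v ≠ ⊤ := hcmid u (Option.mem_def.mpr h1) v (Option.mem_def.mpr h2)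
    have hhead₁ : p₁.head? = some s := by rwa [head_of_append hne₁] at hhead
    have hlast₂ : p₂.getLast? = some b := by rwa [last_of_append hne₂] at hlast
    have hpath₁ : IsPath w' s u p₁ := ⟨hne₁, hhead₁, h1, hc₁⟩
    have hpath₂ : IsPath w' v b p₂ := ⟨hne₂, h2, hlast₂, hc₂⟩
    have hsum : pWeight w' (p₁ ++ p₂) = pWeight w' p₁ + w' u v + pWeight w' p₂ :=
      pWeight_append w' h1 h2
    have hnt₁ : pWeight w' p₁ ≠ ⊤ := pWeight_ne_top hc₁
    have hnt₂ : pWeight w' p₂ ≠ ⊤ := pWeight_ne_top hc₂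
    have hs₁ : pWeight w' p₁ = dist w' s u := by
      by_contra hcon
      have hlt : dist w' s u < pWeight w' p₁ :=
        lt_of_le_of_ne (dist_le_pWeight hpath₁) (Ne.symm hcon)
      obtain ⟨q, hq, hqlt⟩ := exists_path_lt hlt
      have hqpath : IsPath w' s b (q ++ p₂) := by
        refine ⟨by simp [hq.1], by rw [head_of_append hq.1]; exact hq.2.1,
          by rw [last_of_append hne₂]; exact hlast₂,
          List.isChain_append.mpr ⟨hq.2.2.2, hc₂, fun x hx y hy => ?_⟩⟩
        simp only [hq.2.2.1, h2, Option.mem_def, Option.some.injEq] at hx hy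
        subst hx; subst hy; exact huvne
      have hle2 : dist w' s b ≤ pWeight w' (q ++ p₂) := dist_le_pWeight hqpath
      rw [pWeight_append w' hq.2.2.1 h2] at hle2
      have hlt2 : pWeight w' q + w' u v + pWeight w' p₂ <
          pWeight w' p₁ + w' u v + pWeight w' p₂ := by
        rw [add_assoc, add_assoc]
        exact ENNReal.add_lt_add_right (ENNReal.add_ne_top.mpr ⟨huvne, hnt₂⟩) hqlt
      rw [← hsum, hw] at hlt2
      exact (hle2.trans_lt hlt2).false
    have hs₂ : pWeight w' p₂ = dist w' v b := by
      by_contra hcon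
      have hlt : dist w' v b < pWeight w' p₂ :=
        lt_of_le_of_ne (dist_le_pWeight hpath₂) (Ne.symm hcon)
      obtain ⟨q, hq, hqlt⟩ := exists_path_lt hlt
      have hqpath : IsPath w' s b (p₁ ++ q) := by
        refine ⟨by simp [hne₁], by rw [head_of_append hne₁]; exact hhead₁,
          by rw [last_of_append hq.1]; exact hq.2.2.1,
          List.isChain_append.mpr ⟨hc₁, hq.2.2.2, fun x hx y hy => ?_⟩⟩
        simp only [h1, hq.2.1, Option.mem_def, Option.some.injEq] at hx hy
        subst hx; subst hy; exact huvne
      have hle2 : dist w' s b ≤ pWeight w' (p₁ ++ q) := dist_le_pWeight hqpath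
      rw [pWeight_append w' h1 hq.2.1] at hle2
      have hlt2 : pWeight w' p₁ + w' u v + pWeight w' q <
          pWeight w' p₁ + w' u v + pWeight w' p₂ :=
        ENNReal.add_lt_add_left (ENNReal.add_ne_top.mpr ⟨hnt₁, huvne⟩) hqlt
      rw [← hsum, hw] at hlt2
      exact (hle2.trans_lt hlt2).false
    have hno₁ : ¬ edgeOn p₁ u v := by
      intro hcontra
      obtain ⟨q₁, q₂, heq, g1, g2⟩ := edgeOn_split hcontra
      have hq₁ne := ne_nil_of_getLast? g1
      subst heq
      rw [List.isChain_append] at hc₁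
      obtain ⟨gc₁, gc₂, _⟩ := hc₁
      have hq₁path : IsPath w' s u q₁ :=
        ⟨hq₁ne, by rwa [head_of_append hq₁ne] at hhead₁, g1, gc₁⟩
      have hle3 : dist w' s u ≤ pWeight w' q₁ := dist_le_pWeight hq₁path
      rw [← hs₁, pWeight_append w' g1 g2] at hle3
      have hstrict : pWeight w' q₁ < pWeight w' q₁ + w' u v + pWeight w' q₂ := by
        rw [add_assoc]
        refine ENNReal.lt_add_right (pWeight_ne_top gc₁) ?_
        rw [Ne, add_eq_zero]
        rintro ⟨h0, -⟩
        exact (hpos' u v).ne' h0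
      exact (hstrict.trans_le hle3).false
    have hno₂ : ¬ edgeOn p₂ u v := by
      intro hcontra
      obtain ⟨q₁, q₂, heq, g1, g2⟩ := edgeOn_split hcontra
      have hq₂ne := ne_nil_of_head? g2
      subst heq
      rw [List.isChain_append] at hc₂
      obtain ⟨gc₁, gc₂, _⟩ := hc₂
      have hq₂path : IsPath w' v b q₂ :=
        ⟨hq₂ne, g2, by rwa [last_of_append hq₂ne] at hlast₂, gc₂⟩
      have hle3 : dist w' v b ≤ pWeight w' q₂ := dist_le_pWeight hq₂path
      rw [← hs₂, pWeight_append w' g1 g2] at hle3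
      have hstrict : pWeight w' q₂ < pWeight w' q₁ + w' u v + pWeight w' q₂ := by
        have h0 : pWeight w' q₁ + w' u v ≠ 0 := by
          rw [Ne, add_eq_zero]
          rintro ⟨-, h0⟩
          exact (hpos' u v).ne' h0
        have := ENNReal.lt_add_right (pWeight_ne_top gc₂) h0
        rwa [add_comm] at this
      exact (hstrict.trans_le hle3).false
    exact ⟨p₁, p₂, rfl, h1, h2, transfer hle hsame ⟨hpath₁, hs₁⟩ hno₁,
      transfer hle hsame ⟨hpath₂, hs₂⟩ hno₂⟩
  · exact Or.inl ⟨⟨transfer hle hsame hp h, h⟩, fun hB => h hB.1⟩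


end BC
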